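/- Let g be a nonabelian finite-dimensional complex Lie algebra admitting a derivation D of finite multiplicative order m (i.e., D^m = id and m is the order of D). Then m is a multiple of six. -/

import Mathlib

open Module Polynomial

/-- Arithmetic core: if `lam`, `mu`, `lam + mu` are all `m`-th roots of unity, then `6 ∣ m`. -/
lemma aux_six_dvd (m : ℕ) (hm : 0 < m) (lam mu : ℂ) (h1 : lam ^ m = 1) (h2 : mu ^ m = 1)
    (h3 : (lam + mu) ^ m = 1) : 6 ∣ m := by
  have hlam : lam ≠ 0 := by
    intro h; rw [h, zero_pow hm.ne'] at h1; exact zero_ne_one h1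
  set r : ℂ := mu / lam with hr
  set s : ℂ := (lam + mu) / lam with hs
  have hrm : r ^ m = 1 := by rw [hr, div_pow, h2, h1, one_div_one]
  have hsm : s ^ m = 1 := by rw [hs, div_pow, h3, h1, one_div_one]
  -- moduli are 1
  have habs : ∀ z : ℂ, z ^ m = 1 → ‖z‖ = 1 := by
    intro z hz
    have h0 : ‖z‖ ^ m = (1 : ℝ) ^ m := by rw [← norm_pow, hz, norm_one, one_pow]
    exact (pow_left_inj₀ (norm_nonneg z) zero_le_one hm.ne').mp h0
  have habr := habs r hrm
  have habsS := habs s hsm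
  -- translate to real/imaginary parts
  have hnr : r.re * r.re + r.im * r.im = 1 := by
    have := congrArg (· ^ 2) habr
    simpa [Complex.sq_norm, Complex.normSq_apply] using this
  have hsr : s = 1 + r := by
    rw [hs, hr, add_div, div_self hlam]
  have hns : (1 + r.re) * (1 + r.re) + r.im * r.im = 1 := by
    have := congrArg (· ^ 2) habsS
    simp only [Complex.sq_norm, one_pow] at this
    rw [hsr] at this
    simpa [Complex.normSq_apply] using this
  have hre : r.re = -(1 / 2) := by nlinarith
  -- r is a primitive cube root of unity
  have hrr : r ^ 2 + r + 1 = 0 := by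
    have him : r.im * r.im = 3 / 4 := by nlinarith
    apply Complex.ext <;>
      simp [pow_two, Complex.add_re, Complex.add_im, Complex.mul_re, Complex.mul_im, hre] <;>
      nlinarith
  have hs2 : s ^ 2 = r := by rw [hsr]; linear_combination hrr
  have hs3 : s ^ 3 = -1 := by rw [hsr]; linear_combination (r + 2) * hrr
  have hs6 : s ^ 6 = 1 := by
    have : s ^ 6 = (s ^ 3) ^ 2 := by ring
    rw [this, hs3]; ring
  have hsne1 : s ≠ 1 := by
    intro h
    rw [h] at hs3
    norm_num at hs3
  have hrne1 : r ≠ 1 := by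
    intro h
    rw [h] at hrr
    norm_num at hrr
  -- gcd argument
  have hd : s ^ Nat.gcd m 6 = 1 := pow_gcd_eq_one.mpr ⟨hsm, hs6⟩
  have hd6 : Nat.gcd m 6 ∣ 6 := Nat.gcd_dvd_right m 6
  have hdm : Nat.gcd m 6 ∣ m := Nat.gcd_dvd_left m 6
  have hdle : Nat.gcd m 6 ≤ 6 := Nat.le_of_dvd (by norm_num) hd6
  interval_cases h : Nat.gcd m 6
  · omega
  · simp at hd; exact absurd hd hsne1
  · rw [hs2] at hd; exact absurd hd hrne1
  · rw [hs3] at hd; norm_num at hd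
  · omega
  · omega
  · exact hdm

theorem order_multiple_of_six (L : Type*) [LieRing L] [LieAlgebra ℂ L]
    [FiniteDimensional ℂ L] (hna : ∃ x y : L, ⁅x, y⁆ ≠ 0)
    (D : LieDerivation ℂ L L) (m : ℕ) (hm : 0 < m)
    (hDm : D.toLinearMap ^ m = 1)
    (hmin : ∀ k : ℕ, 0 < k → k < m → D.toLinearMap ^ k ≠ 1) :
    6 ∣ m := by
  set f : Module.End ℂ L := D.toLinearMap with hf
  -- f is semisimple
  have hsq : Squarefree (X ^ m - C (1 : ℂ)) :=
    (Polynomial.separable_X_pow_sub_C (1 : ℂ) (by exact_mod_cast hm.ne') one_ne_zero).squarefree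
  have hss : f.IsSemisimple := by
    apply Module.End.isSemisimple_of_squarefree_aeval_eq_zero hsq
    rw [map_sub, map_pow, aeval_X, aeval_C]
    simp [hDm]
  have hspan : ⨆ μ : ℂ, f.eigenspace μ = ⊤ := by
    have h := Module.End.iSup_maxGenEigenspace_eq_top f
    simpa [hss.isFinitelySemisimple.maxGenEigenspace_eq_eigenspace] using h
  -- every eigenvalue is an m-th root of unity
  have hroot : ∀ (μ : ℂ) (v : L), f v = μ • v → v ≠ 0 → μ ^ m = 1 := by
    intro μ v hv hv0
    have hpow : ∀ k : ℕ, (f ^ k) v = μ ^ k • v := by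
      intro k; induction k with
      | zero => simp
      | succ k ih =>
        rw [pow_succ, Module.End.mul_apply, hv, map_smul, ih, smul_smul, pow_succ, mul_comm]
    have h1 := hpow m
    rw [hDm] at h1
    have h2 : (μ ^ m - 1) • v = 0 := by
      rw [sub_smul, one_smul, ← h1]; simp
    rcases smul_eq_zero.mp h2 with h | h
    · exact sub_eq_zero.mp h
    · exact absurd h hv0
  -- find eigenvectors with nonzero bracket
  have key : ∃ (μ₁ μ₂ : ℂ) (x y : L), f x = μ₁ • x ∧ f y = μ₂ • y ∧ ⁅x, y⁆ ≠ 0 := by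
    by_contra h
    push_neg at h
    obtain ⟨a, b, hab⟩ := hna
    apply hab
    have ha : a ∈ ⨆ μ : ℂ, f.eigenspace μ := hspan ▸ Submodule.mem_top
    have hb : b ∈ ⨆ μ : ℂ, f.eigenspace μ := hspan ▸ Submodule.mem_top
    refine Submodule.iSup_induction _ (motive := fun a => ⁅a, b⁆ = 0) ha
      (fun μ₁ x hx => ?_) (by simp) (fun x y hx hy => show ⁅x + y, b⁆ = 0 by rw [add_lie]; rw [hx, hy, add_zero])
    rw [Module.End.mem_eigenspace_iff] at hx
    refine Submodule.iSup_induction _ (motive := fun b => ⁅x, b⁆ = 0) hb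
      (fun μ₂ y hy => ?_) (by simp) (fun y z hy hz => show ⁅x, y + z⁆ = 0 by rw [lie_add]; rw [hy, hz, add_zero])
    rw [Module.End.mem_eigenspace_iff] at hy
    exact h μ₁ μ₂ x y hx hy
  obtain ⟨μ₁, μ₂, x, y, hx, hy, hxy⟩ := key
  have hz : f ⁅x, y⁆ = (μ₁ + μ₂) • ⁅x, y⁆ := by
    have hD := D.apply_lie_eq_add x y
    have h2 : f ⁅x, y⁆ = ⁅x, f y⁆ + ⁅f x, y⁆ := hD
    rw [h2, hx, hy, smul_lie, lie_smul, add_smul, add_comm]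
  have hx0 : x ≠ 0 := fun h => hxy (by rw [h, zero_lie])
  have hy0 : y ≠ 0 := fun h => hxy (by rw [h, lie_zero])
  exact aux_six_dvd m hm μ₁ μ₂ (hroot μ₁ x hx hx0) (hroot μ₂ y hy hy0)
    (hroot (μ₁ + μ₂) ⁅x, y⁆ hz hxy)
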